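/- If g ∈ SL(2,ℤ) and g₁₁ + α g₁₂ ≠ 0, then the image of the lattice set F(α,β) = {(j,k) ∈ ℤ² : |k − jα| < β} under the automorphism (j,k) ↦ (g₁₁ j + g₁₂ k, g₂₁ j + g₂₂ k) equals F((g₂₁ + α g₂₂)/(g₁₁ + α g₁₂), β/|g₁₁ + α g₁₂|). -/

import Mathlib

open Filter

/-- `F(α,β) = {(j,k) ∈ ℤ² : |k - jα| < β}`. -/
def latticeF (α β : ℝ) : Set (ℤ × ℤ) := {p | |(p.2 : ℝ) - (p.1 : ℝ) * α| < β}

lemma key_id (α : ℝ) (g11 g12 g21 g22 : ℤ)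
    (hdet : g11 * g22 - g12 * g21 = 1) (hne : (g11 : ℝ) + α * g12 ≠ 0) (a b : ℤ) :
    ((g21 * a + g22 * b : ℤ) : ℝ) -
      ((g11 * a + g12 * b : ℤ) : ℝ) * (((g21 : ℝ) + α * g22) / ((g11 : ℝ) + α * g12))
    = ((b : ℝ) - a * α) / ((g11 : ℝ) + α * g12) := by
  have hd : ((g11 * g22 : ℤ) : ℝ) - ((g12 * g21 : ℤ) : ℝ) = 1 := by
    rw [← Int.cast_sub, hdet]; norm_num
  push_cast at hd ⊢
  have hne' : (g11 : ℝ) + g12 * α ≠ 0 := by rw [mul_comm]; exact hne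
  field_simp
  linear_combination ((b : ℝ) - a * α) * hd

/-- The action of `g ∈ SL(2,ℤ)` on `ℤ²` maps `F(α,β)` onto
`F((g₂₁+αg₂₂)/(g₁₁+αg₁₂), β/|g₁₁+αg₁₂|)` provided `g₁₁+αg₁₂ ≠ 0`. -/
theorem sl2_image_latticeF (α β : ℝ) (hβ : 0 < β) (g11 g12 g21 g22 : ℤ)
    (hdet : g11 * g22 - g12 * g21 = 1) (hne : (g11 : ℝ) + α * g12 ≠ 0) :
    (fun p : ℤ × ℤ => (g11 * p.1 + g12 * p.2, g21 * p.1 + g22 * p.2)) '' latticeF α β =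
    latticeF (((g21 : ℝ) + α * g22) / ((g11 : ℝ) + α * g12))
      (β / |(g11 : ℝ) + α * g12|) := by
  have habs : (0:ℝ) < |(g11 : ℝ) + α * g12| := abs_pos.mpr hne
  ext ⟨j, k⟩
  simp only [Set.mem_image, latticeF, Set.mem_setOf_eq, Prod.mk.injEq, Prod.exists]
  constructor
  · rintro ⟨a, b, hab, h1, h2⟩
    subst h1 h2
    rw [key_id α g11 g12 g21 g22 hdet hne a b, abs_div]
    exact div_lt_div_of_pos_right hab habs
  · intro h
    refine ⟨g22 * j - g12 * k, -g21 * j + g11 * k, ?_, by linear_combination j * hdet, by linear_combination k * hdet⟩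
    have := key_id α g11 g12 g21 g22 hdet hne (g22 * j - g12 * k) (-g21 * j + g11 * k)
    have hj : (g11 * (g22 * j - g12 * k) + g12 * (-g21 * j + g11 * k) : ℤ) = j := by
      linear_combination j * hdet
    have hk : (g21 * (g22 * j - g12 * k) + g22 * (-g21 * j + g11 * k) : ℤ) = k := by
      linear_combination k * hdet
    rw [hj, hk] at this
    have h2 : |((-g21 * j + g11 * k : ℤ) : ℝ) - ((g22 * j - g12 * k : ℤ) : ℝ) * α| / |(g11:ℝ) + α * g12| < β / |(g11:ℝ) + α * g12| := by
      rw [← abs_div, ← this]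
      exact h
    have := (div_lt_div_iff_of_pos_right habs).mp h2
    exact this
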